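/- Let $d \ge 1$ and $p \in [1,\infty)$. Let $\nu : \mathbb{R}^d \to [0,\infty)$ be measurable and radial (i.e. $\nu(h) = \rho(|h|)$ for some measurable $\rho$) with $\int_{\mathbb{R}^d}(1 \wedge |h|^p)\,\nu(h)\,dh = 1$. For $\varepsilon \in (0,1]$ define $\nu_\varepsilon(h) = \varepsilon^{-d-p}\,\nu(h/\varepsilon)$ if $|h| \le \varepsilon$; $\nu_\varepsilon(h) = \varepsilon^{-d}\,|h|^{-p}\,\nu(h/\varepsilon)$ if $\varepsilon < |h| \le 1$; and $\nu_\varepsilon(h) = \varepsilon^{-d}\,\nu(h/\varepsilon)$ if $|h| > 1$. Then: (i) for every $\varepsilon \in (0,1]$, $\int_{\mathbb{R}^d}(1 \wedge |h|^p)\,\nu_\varepsilon(h)\,dh = 1$; and (ii) for every $\delta > 0$, $\int_{\{|h| > \delta\}} \nu_\varepsilon(h)\,dh \to 0$ as $\varepsilon \to 0^+$. In particular $(\nu_\varepsilon)_\varepsilon$ is a $p$-Lévy approximation of the unity. -/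

import Mathlib

open MeasureTheory Filter
open scoped ENNReal Topology

/-- A family `(ν_ε)_{ε∈(0,1)}` of measurable functions `ℝ^d → [0,∞)` is a `p`-Lévy
approximation of the unity: each `ν_ε` is radial with
`∫ (1 ∧ |h|^p) ν_ε(h) dh = 1`, and for every `δ > 0`,
`∫_{|h|>δ} ν_ε(h) dh → 0` as `ε → 0⁺`. -/
def IsPLevyApproxUnity (d : ℕ) (p : ℝ)
    (ν : ℝ → EuclideanSpace ℝ (Fin d) → ℝ) : Prop :=
  (∀ ε ∈ Set.Ioo (0 : ℝ) 1,
    Measurable (ν ε) ∧ (∀ h, 0 ≤ ν ε h) ∧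
    (∀ h h' : EuclideanSpace ℝ (Fin d), ‖h‖ = ‖h'‖ → ν ε h = ν ε h') ∧
    ∫⁻ h : EuclideanSpace ℝ (Fin d), ENNReal.ofReal (min 1 (‖h‖ ^ p) * ν ε h) = 1) ∧
  (∀ δ : ℝ, 0 < δ →
    Tendsto (fun ε => ∫⁻ h in {h : EuclideanSpace ℝ (Fin d) | δ < ‖h‖},
        ENNReal.ofReal (ν ε h))
      (𝓝[>] (0 : ℝ)) (𝓝 0))

private lemma lint_comp_smul {d : ℕ} (f : EuclideanSpace ℝ (Fin d) → ℝ≥0∞) {r : ℝ}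
    (hr : r ≠ 0) :
    ∫⁻ x, f (r • x) = ENNReal.ofReal |(r ^ d)⁻¹| * ∫⁻ x, f x := by
  let e : EuclideanSpace ℝ (Fin d) ≃ᵐ EuclideanSpace ℝ (Fin d) :=
    (Homeomorph.smul (isUnit_iff_ne_zero.2 hr).unit).toMeasurableEquiv
  have he : ∀ x, e x = r • x := fun x => by
    simp [e, Homeomorph.smul, Units.smul_def]
  have hmap : (volume : Measure (EuclideanSpace ℝ (Fin d))).map e
      = ENNReal.ofReal |(r ^ d)⁻¹| • volume := by
    have := Measure.map_addHaar_smul (volume : Measure (EuclideanSpace ℝ (Fin d))) hr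
    rw [show ⇑e = (r • ·) from funext he, this, finrank_euclideanSpace_fin]
  calc ∫⁻ x, f (r • x) = ∫⁻ x, f (e x) := by simp_rw [he]
    _ = ∫⁻ y, f y ∂((volume : Measure (EuclideanSpace ℝ (Fin d))).map e) :=
        (lintegral_map_equiv f e).symm
    _ = ENNReal.ofReal |(r ^ d)⁻¹| * ∫⁻ x, f x := by rw [hmap, lintegral_smul_measure, smul_eq_mul]


/-- The rescaling of a normalized radial `p`-Lévy kernel
`ν(h) = ρ(|h|)` (with the three-regime rescaling `ν_ε`) satisfies:
(i) `∫ (1 ∧ |h|^p) ν_ε(h) dh = 1` for every `ε ∈ (0,1]`;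
(ii) `∫_{|h|>δ} ν_ε(h) dh → 0` as `ε → 0⁺` for every `δ > 0`;
in particular `(ν_ε)` is a `p`-Lévy approximation of the unity. -/
theorem stmt_17 (d : ℕ) (hd : 1 ≤ d) (p : ℝ) (hp : 1 ≤ p)
    (ρ : ℝ → ℝ) (hρ : Measurable ρ) (hρ0 : ∀ t, 0 ≤ ρ t)
    (hnorm : ∫⁻ h : EuclideanSpace ℝ (Fin d),
      ENNReal.ofReal (min 1 (‖h‖ ^ p) * ρ ‖h‖) = 1)
    (νe : ℝ → EuclideanSpace ℝ (Fin d) → ℝ)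
    (hνe : ∀ ε ∈ Set.Ioc (0 : ℝ) 1, ∀ h : EuclideanSpace ℝ (Fin d),
      νe ε h =
        if ‖h‖ ≤ ε then ε ^ (-(d : ℝ) - p) * ρ (‖h‖ / ε)
        else if ‖h‖ ≤ 1 then ε ^ (-(d : ℝ)) * ‖h‖ ^ (-p) * ρ (‖h‖ / ε)
        else ε ^ (-(d : ℝ)) * ρ (‖h‖ / ε)) :
    (∀ ε ∈ Set.Ioc (0 : ℝ) 1,
      ∫⁻ h : EuclideanSpace ℝ (Fin d),
        ENNReal.ofReal (min 1 (‖h‖ ^ p) * νe ε h) = 1) ∧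
    (∀ δ : ℝ, 0 < δ →
      Tendsto (fun ε => ∫⁻ h in {h : EuclideanSpace ℝ (Fin d) | δ < ‖h‖},
          ENNReal.ofReal (νe ε h))
        (𝓝[>] (0 : ℝ)) (𝓝 0)) ∧
    IsPLevyApproxUnity d p νe := by
  have hp0 : (0 : ℝ) ≤ p := zero_le_one.trans hp
  classical
  set F : EuclideanSpace ℝ (Fin d) → ℝ≥0∞ :=
    fun g => ENNReal.ofReal (min 1 (‖g‖ ^ p) * ρ ‖g‖) with hFdef
  have hFnorm : (∫⁻ g : EuclideanSpace ℝ (Fin d), F g) = 1 := hnorm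
  have hnsmul : ∀ ε : ℝ, 0 < ε → ∀ h : EuclideanSpace ℝ (Fin d),
      ‖ε⁻¹ • h‖ = ‖h‖ / ε := by
    intro ε hε h
    rw [norm_smul, Real.norm_eq_abs, abs_inv, abs_of_pos hε, div_eq_inv_mul]
  -- Part (i)
  have part1 : ∀ ε ∈ Set.Ioc (0 : ℝ) 1,
      ∫⁻ h : EuclideanSpace ℝ (Fin d),
        ENNReal.ofReal (min 1 (‖h‖ ^ p) * νe ε h) = 1 := by
    rintro ε ⟨hε0, hε1⟩
    have hεinv : (ε : ℝ)⁻¹ ≠ 0 := inv_ne_zero hε0.ne'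
    have hnd : (0 : ℝ) ≤ ε ^ (-(d : ℝ)) := Real.rpow_nonneg hε0.le _
    have hpt : ∀ h : EuclideanSpace ℝ (Fin d), min 1 (‖h‖ ^ p) * νe ε h
        = ε ^ (-(d : ℝ)) * (min 1 (‖ε⁻¹ • h‖ ^ p) * ρ ‖ε⁻¹ • h‖) := by
      intro h
      rw [hνe ε ⟨hε0, hε1⟩ h, hnsmul ε hε0 h]
      have hn0 : (0 : ℝ) ≤ ‖h‖ := norm_nonneg h
      split_ifs with h1 h2
      · have hm1 : min 1 (‖h‖ ^ p) = ‖h‖ ^ p :=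
          min_eq_right (Real.rpow_le_one hn0 (h1.trans hε1) hp0)
        have hle : ‖h‖ / ε ≤ 1 := (div_le_one hε0).2 h1
        have hm2 : min 1 ((‖h‖ / ε) ^ p) = (‖h‖ / ε) ^ p :=
          min_eq_right (Real.rpow_le_one (by positivity) hle hp0)
        rw [hm1, hm2, Real.div_rpow hn0 hε0.le,
          show -(d : ℝ) - p = -(d : ℝ) + (-p) by ring,
          Real.rpow_add hε0, Real.rpow_neg hε0.le p]
        ring
      · have h1' : ε < ‖h‖ := not_le.1 h1
        have hn0' : (0 : ℝ) < ‖h‖ := hε0.trans h1'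
        have hm1 : min 1 (‖h‖ ^ p) = ‖h‖ ^ p :=
          min_eq_right (Real.rpow_le_one hn0 h2 hp0)
        have hge : (1 : ℝ) ≤ ‖h‖ / ε := le_of_lt ((one_lt_div hε0).2 h1')
        have hm2 : min 1 ((‖h‖ / ε) ^ p) = 1 := min_eq_left (Real.one_le_rpow hge hp0)
        have hne : ‖h‖ ^ p ≠ 0 := (Real.rpow_pos_of_pos hn0' p).ne'
        rw [hm1, hm2, Real.rpow_neg hn0]
        field_simp
      · have h2' : (1 : ℝ) < ‖h‖ := not_le.1 h2
        have hm1 : min 1 (‖h‖ ^ p) = 1 := min_eq_left (Real.one_le_rpow h2'.le hp0)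
        have hge : (1 : ℝ) ≤ ‖h‖ / ε :=
          le_of_lt ((one_lt_div hε0).2 (not_le.1 h1))
        have hm2 : min 1 ((‖h‖ / ε) ^ p) = 1 := min_eq_left (Real.one_le_rpow hge hp0)
        rw [hm1, hm2]; ring
    have habs : |((ε⁻¹ : ℝ) ^ d)⁻¹| = ε ^ d := by
      rw [← inv_pow, inv_inv]; exact abs_of_pos (pow_pos hε0 d)
    have hcancel : ε ^ (-(d : ℝ)) * ε ^ d = 1 := by
      rw [Real.rpow_neg hε0.le, Real.rpow_natCast,
        inv_mul_cancel₀ (pow_ne_zero d hε0.ne')]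
    calc ∫⁻ h : EuclideanSpace ℝ (Fin d),
          ENNReal.ofReal (min 1 (‖h‖ ^ p) * νe ε h)
        = ∫⁻ h : EuclideanSpace ℝ (Fin d),
            ENNReal.ofReal (ε ^ (-(d : ℝ))) * F (ε⁻¹ • h) := by
          refine lintegral_congr fun h => ?_
          rw [hpt h, ENNReal.ofReal_mul hnd, hFdef]
      _ = ENNReal.ofReal (ε ^ (-(d : ℝ)))
            * ∫⁻ h : EuclideanSpace ℝ (Fin d), F (ε⁻¹ • h) :=
          lintegral_const_mul' _ _ ENNReal.ofReal_ne_top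
      _ = ENNReal.ofReal (ε ^ (-(d : ℝ)))
            * (ENNReal.ofReal |((ε⁻¹ : ℝ) ^ d)⁻¹| * ∫⁻ g, F g) := by
          rw [lint_comp_smul F hεinv]
      _ = 1 := by
          rw [habs, hFnorm, mul_one, ← ENNReal.ofReal_mul hnd, hcancel,
            ENNReal.ofReal_one]
  -- Part (ii)
  have hmeasset : ∀ R : ℝ, MeasurableSet {g : EuclideanSpace ℝ (Fin d) | R < ‖g‖} :=
    fun R => measurableSet_lt measurable_const measurable_norm
  have part2 : ∀ δ : ℝ, 0 < δ →
      Tendsto (fun ε => ∫⁻ h in {h : EuclideanSpace ℝ (Fin d) | δ < ‖h‖},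
          ENNReal.ofReal (νe ε h)) (𝓝[>] (0 : ℝ)) (𝓝 0) := by
    intro δ hδ
    set T : ℝ → ℝ≥0∞ :=
      fun R => ∫⁻ g in {g : EuclideanSpace ℝ (Fin d) | R < ‖g‖}, F g with hT
    have hTmono : ∀ {R₁ R₂ : ℝ}, R₁ ≤ R₂ → T R₂ ≤ T R₁ := fun hR =>
      lintegral_mono_set fun g hg => lt_of_le_of_lt hR hg
    have hTle : ∀ R, T R ≤ 1 := fun R => by
      rw [← hFnorm]; exact setLIntegral_le_lintegral _ _
    have htail : Tendsto (fun n : ℕ => T n) atTop (𝓝 0) := by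
      have hμ : ∀ n : ℕ, T n
          = (volume.withDensity F) {g : EuclideanSpace ℝ (Fin d) | (n : ℝ) < ‖g‖} :=
        fun n => (withDensity_apply F (hmeasset n)).symm
      have h0 : (⋂ n : ℕ, {g : EuclideanSpace ℝ (Fin d) | (n : ℝ) < ‖g‖}) = ∅ := by
        ext g
        simp only [Set.mem_iInter, Set.mem_setOf_eq, Set.mem_empty_iff_false,
          iff_false, not_forall, not_lt]
        obtain ⟨n, hn⟩ := exists_nat_gt ‖g‖
        exact ⟨n, hn.le⟩
      have hten := tendsto_measure_iInter_atTop
        (μ := (volume : Measure (EuclideanSpace ℝ (Fin d))).withDensity F)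
        (s := fun n : ℕ => {g : EuclideanSpace ℝ (Fin d) | (n : ℝ) < ‖g‖})
        (fun n => (hmeasset (n : ℝ)).nullMeasurableSet)
        (fun m n hmn g hg => lt_of_le_of_lt (Nat.cast_le.2 hmn : (m:ℝ) ≤ n) hg)
        ⟨0, by rw [← hμ 0]; exact ((hTle _).trans_lt ENNReal.one_lt_top).ne⟩
      rw [h0] at hten
      simp only [measure_empty] at hten
      have : (fun n : ℕ => T n) = ((volume.withDensity F) ∘
          fun n : ℕ => {g : EuclideanSpace ℝ (Fin d) | (n : ℝ) < ‖g‖}) :=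
        funext fun n => hμ n
      rw [this]
      exact hten
    rw [ENNReal.tendsto_nhds_zero]
    intro η hη
    set C : ℝ := max 1 (δ ^ (-p)) with hC
    have hC1 : (1 : ℝ) ≤ C := le_max_left _ _
    have hC0 : (0 : ℝ) ≤ C := zero_le_one.trans hC1
    have hη' : 0 < η / ENNReal.ofReal C :=
      ENNReal.div_pos hη.ne' ENNReal.ofReal_ne_top
    obtain ⟨n, hn⟩ : ∃ n : ℕ, T n ≤ η / ENNReal.ofReal C := by
      have := htail.eventually_lt_const hη'
      exact this.exists.imp fun n h => h.le
    have hε₀pos : (0 : ℝ) < min (min δ 1) (δ / (n + 1)) := by positivity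
    filter_upwards [Ioo_mem_nhdsGT_of_mem (Set.mem_Ico.2 ⟨le_refl (0 : ℝ), hε₀pos⟩)]
      with ε hε
    obtain ⟨hε0, hεlt⟩ := hε
    have hεδ : ε ≤ δ := hεlt.le.trans ((min_le_left _ _).trans (min_le_left _ _))
    have hε1 : ε ≤ 1 := hεlt.le.trans ((min_le_left _ _).trans (min_le_right _ _))
    have hεn : (n : ℝ) < δ / ε := by
      have h1 : ε < δ / (n + 1) := hεlt.trans_le (min_le_right _ _)
      have h2 : ε * ((n : ℝ) + 1) < δ :=
        (lt_div_iff₀ (by positivity)).1 h1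
      exact (lt_div_iff₀ hε0).2 (by nlinarith)
    have hεd' : (0 : ℝ) ≤ ε ^ (-(d : ℝ)) := Real.rpow_nonneg hε0.le _
    have hbound : ∀ h : EuclideanSpace ℝ (Fin d), δ < ‖h‖ →
        νe ε h ≤ (C * ε ^ (-(d : ℝ))) * (min 1 (‖ε⁻¹ • h‖ ^ p) * ρ ‖ε⁻¹ • h‖) := by
      intro h hh
      rw [hνe ε ⟨hε0, hε1⟩ h, hnsmul ε hε0 h]
      have hn1 : ε < ‖h‖ := lt_of_le_of_lt hεδ hh
      have hge : (1 : ℝ) ≤ ‖h‖ / ε := le_of_lt ((one_lt_div hε0).2 hn1)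
      have hm2 : min 1 ((‖h‖ / ε) ^ p) = 1 := min_eq_left (Real.one_le_rpow hge hp0)
      rw [if_neg (not_le.2 hn1), hm2]
      have hρs : (0 : ℝ) ≤ ρ (‖h‖ / ε) := hρ0 _
      split_ifs with h2
      · have hhp : ‖h‖ ^ (-p) ≤ δ ^ (-p) :=
          Real.rpow_le_rpow_of_nonpos hδ hh.le (neg_nonpos.2 hp0)
        have hδC : δ ^ (-p) ≤ C := le_max_right _ _
        calc ε ^ (-(d : ℝ)) * ‖h‖ ^ (-p) * ρ (‖h‖ / ε)
            ≤ ε ^ (-(d : ℝ)) * C * ρ (‖h‖ / ε) := by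
              apply mul_le_mul_of_nonneg_right _ hρs
              exact mul_le_mul_of_nonneg_left (hhp.trans hδC) hεd'
          _ = C * ε ^ (-(d : ℝ)) * (1 * ρ (‖h‖ / ε)) := by ring
      · nlinarith [mul_nonneg hεd' hρs]
    have habs : |((ε⁻¹ : ℝ) ^ d)⁻¹| = ε ^ d := by
      rw [← inv_pow, inv_inv]; exact abs_of_pos (pow_pos hε0 d)
    have hcancel : C * ε ^ (-(d : ℝ)) * ε ^ d = C := by
      rw [mul_assoc, Real.rpow_neg hε0.le, Real.rpow_natCast,
        inv_mul_cancel₀ (pow_ne_zero d hε0.ne'), mul_one]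
    calc ∫⁻ h in {h : EuclideanSpace ℝ (Fin d) | δ < ‖h‖}, ENNReal.ofReal (νe ε h)
        ≤ ∫⁻ h in {h : EuclideanSpace ℝ (Fin d) | δ < ‖h‖},
            ENNReal.ofReal (C * ε ^ (-(d : ℝ))) * F (ε⁻¹ • h) := by
          refine setLIntegral_mono' (hmeasset δ) fun h hh => ?_
          rw [hFdef, ← ENNReal.ofReal_mul (by positivity)]
          exact ENNReal.ofReal_le_ofReal (hbound h hh)
      _ = ENNReal.ofReal (C * ε ^ (-(d : ℝ)))
            * ∫⁻ h in {h : EuclideanSpace ℝ (Fin d) | δ < ‖h‖}, F (ε⁻¹ • h) :=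
          lintegral_const_mul' _ _ ENNReal.ofReal_ne_top
      _ = ENNReal.ofReal (C * ε ^ (-(d : ℝ)))
            * ∫⁻ h : EuclideanSpace ℝ (Fin d),
                ({g : EuclideanSpace ℝ (Fin d) | δ / ε < ‖g‖}.indicator F) (ε⁻¹ • h) := by
          congr 1
          rw [← lintegral_indicator (hmeasset δ)]
          refine lintegral_congr fun h => ?_
          have hiff : (h ∈ {g : EuclideanSpace ℝ (Fin d) | δ < ‖g‖})
              ↔ (ε⁻¹ • h ∈ {g : EuclideanSpace ℝ (Fin d) | δ / ε < ‖g‖}) := by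
            simp only [Set.mem_setOf_eq, hnsmul ε hε0 h]
            exact (div_lt_div_iff_of_pos_right hε0).symm
          simp only [Set.indicator_apply]
          by_cases hh : h ∈ {g : EuclideanSpace ℝ (Fin d) | δ < ‖g‖}
          · rw [if_pos hh, if_pos (hiff.1 hh)]
          · rw [if_neg hh, if_neg fun c => hh (hiff.2 c)]
      _ = ENNReal.ofReal (C * ε ^ (-(d : ℝ)))
            * (ENNReal.ofReal |((ε⁻¹ : ℝ) ^ d)⁻¹| * T (δ / ε)) := by
          rw [lint_comp_smul _ (inv_ne_zero hε0.ne'),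
            lintegral_indicator (hmeasset (δ / ε))]
      _ = ENNReal.ofReal C * T (δ / ε) := by
          rw [habs, ← mul_assoc, ← ENNReal.ofReal_mul (by positivity), hcancel]
      _ ≤ ENNReal.ofReal C * (η / ENNReal.ofReal C) :=
          mul_le_mul_right ((hTmono hεn.le).trans hn) _
      _ ≤ η := ENNReal.mul_div_le
  refine ⟨part1, part2, ⟨fun ε hε => ?_, part2⟩⟩
  have hε' : ε ∈ Set.Ioc (0 : ℝ) 1 := ⟨hε.1, hε.2.le⟩
  refine ⟨?_, ?_, ?_, part1 ε hε'⟩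
  · have hfun : νe ε = fun h : EuclideanSpace ℝ (Fin d) =>
        if ‖h‖ ≤ ε then ε ^ (-(d : ℝ) - p) * ρ (‖h‖ / ε)
        else if ‖h‖ ≤ 1 then ε ^ (-(d : ℝ)) * ‖h‖ ^ (-p) * ρ (‖h‖ / ε)
        else ε ^ (-(d : ℝ)) * ρ (‖h‖ / ε) := funext (hνe ε hε')
    rw [hfun]
    refine Measurable.ite (measurableSet_le measurable_norm measurable_const)
      (measurable_const.mul (hρ.comp (measurable_norm.div_const ε)))
      (Measurable.ite (measurableSet_le measurable_norm measurable_const)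
        ((measurable_const.mul (measurable_norm.pow measurable_const)).mul
          (hρ.comp (measurable_norm.div_const ε)))
        (measurable_const.mul (hρ.comp (measurable_norm.div_const ε))))
  · intro h
    rw [hνe ε hε' h]
    split_ifs
    · exact mul_nonneg (Real.rpow_nonneg hε.1.le _) (hρ0 _)
    · exact mul_nonneg
        (mul_nonneg (Real.rpow_nonneg hε.1.le _) (Real.rpow_nonneg (norm_nonneg h) _))
        (hρ0 _)
    · exact mul_nonneg (Real.rpow_nonneg hε.1.le _) (hρ0 _)
  · intro h h' hhh
    rw [hνe ε hε' h, hνe ε hε' h', hhh]
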